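/- Let (Ω, ℱ, μ) be a probability space and let G, G★ : Ω → ℝ^p be random vectors with all coordinates in L²(μ) and mean zero (∫ G dμ = 0 and ∫ G★ dμ = 0). Suppose V★ = (∫ G★ᵢ G★ⱼ dμ)_{i,j} is positive definite and that the p × p matrix D = (∫ Gᵢ G★ⱼ dμ)_{i,j} is invertible. Then the matrix D⁻¹ (∫ Gᵢ Gⱼ dμ)_{i,j} (D⁻¹)ᵀ − V★⁻¹ is positive semidefinite; that is, the sandwich matrix D⁻¹ E[G Gᵀ] D⁻ᵀ is bounded below in the positive-semidefinite order by E[G★ G★ᵀ]⁻¹, the sandwich matrix attained by G★ itself. -/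

import Mathlib

open MeasureTheory Matrix

private lemma l2_mul_integrable {Ω : Type*} {mΩ : MeasurableSpace Ω} {μ : Measure Ω}
    {f g : Ω → ℝ} (hf : MemLp f 2 μ) (hg : MemLp g 2 μ) :
    Integrable (fun ω => f ω * g ω) μ := by
  have h1 := (hf.add hg).integrable_sq
  have h2 := hf.integrable_sq
  have h3 := hg.integrable_sq
  have heq : (fun ω => f ω * g ω) = fun ω => ((f ω + g ω) ^ 2 - f ω ^ 2 - g ω ^ 2) / 2 := by
    ext ω; ring
  rw [heq]
  exact ((h1.sub h2).sub h3).div_const 2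

private lemma aux_sum_int {Ω : Type*} {mΩ : MeasurableSpace Ω} (μ : Measure Ω)
    {p : ℕ} {f h : Ω → Fin p → ℝ}
    (hf : ∀ i, MemLp (fun ω => f ω i) 2 μ) (hh : ∀ i, MemLp (fun ω => h ω i) 2 μ)
    (a b : Fin p → ℝ) :
    ∫ ω, (∑ i, a i * f ω i) * (∑ j, b j * h ω j) ∂μ
      = ∑ i, ∑ j, a i * b j * ∫ ω, f ω i * h ω j ∂μ := by
  have hint : ∀ i j, Integrable (fun ω => f ω i * h ω j) μ :=
    fun i j => l2_mul_integrable (hf i) (hh j)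
  have hrw : ∀ ω, (∑ i, a i * f ω i) * (∑ j, b j * h ω j)
      = ∑ i, ∑ j, a i * b j * (f ω i * h ω j) := by
    intro ω
    rw [Finset.sum_mul_sum]
    exact Finset.sum_congr rfl fun i _ => Finset.sum_congr rfl fun j _ => by ring
  simp_rw [hrw]
  rw [integral_finset_sum _ (fun i _ =>
    integrable_finset_sum _ (fun j _ => ((hint i j).const_mul _)))]
  refine Finset.sum_congr rfl fun i _ => ?_
  rw [integral_finset_sum _ (fun j _ => ((hint i j).const_mul _))]
  exact Finset.sum_congr rfl fun j _ => integral_const_mul _ _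

private lemma aux_dot {p : ℕ} (M : Matrix (Fin p) (Fin p) ℝ) (a b : Fin p → ℝ) :
    a ⬝ᵥ M.mulVec b = ∑ i, ∑ j, a i * b j * M i j := by
  simp only [dotProduct, mulVec, Finset.mul_sum]
  exact Finset.sum_congr rfl fun i _ => Finset.sum_congr rfl fun j _ => by ring

/-- Optimality of the estimating function `G★`: if the second-moment matrix `V★ = E[G★ G★ᵀ]` is
positive definite and `D = E[G G★ᵀ]` is invertible, then the sandwich matrix
`D⁻¹ E[G Gᵀ] D⁻ᵀ` dominates `V★⁻¹` in the positive-semidefinite order. -/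
theorem stmt_15 {Ω : Type*} {mΩ : MeasurableSpace Ω}
    (μ : Measure Ω) [IsProbabilityMeasure μ]
    (p : ℕ) (G Gstar : Ω → Fin p → ℝ)
    (hG : ∀ i, MemLp (fun ω => G ω i) 2 μ) (hGstar : ∀ i, MemLp (fun ω => Gstar ω i) 2 μ)
    (hGmean : ∀ i, ∫ ω, G ω i ∂μ = 0) (hGstarmean : ∀ i, ∫ ω, Gstar ω i ∂μ = 0)
    (Vstar : Matrix (Fin p) (Fin p) ℝ)
    (hVstar : Vstar = fun i j => ∫ ω, Gstar ω i * Gstar ω j ∂μ)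
    (D : Matrix (Fin p) (Fin p) ℝ) (hD : D = fun i j => ∫ ω, G ω i * Gstar ω j ∂μ)
    (Vg : Matrix (Fin p) (Fin p) ℝ) (hVg : Vg = fun i j => ∫ ω, G ω i * G ω j ∂μ)
    (hVstarPos : Vstar.PosDef) (hDinv : IsUnit D) :
    (D⁻¹ * Vg * (D⁻¹)ᵀ - Vstar⁻¹).PosSemidef := by
  have hDdet : IsUnit D.det := (Matrix.isUnit_iff_isUnit_det D).mp hDinv
  have hVdet : IsUnit Vstar.det := (Matrix.isUnit_iff_isUnit_det Vstar).mp hVstarPos.isUnit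
  have hVgSymm : Vgᵀ = Vg := by
    subst hVg; ext i j
    show (∫ ω, G ω j * G ω i ∂μ) = ∫ ω, G ω i * G ω j ∂μ
    congr 1; funext ω; ring
  have hVstarHerm : Vstar.IsHermitian := hVstarPos.1
  have hVinvHerm : (Vstar⁻¹).IsHermitian := hVstarHerm.inv
  rw [Matrix.posSemidef_iff_dotProduct_mulVec]
  constructor
  · -- Hermitian
    have h1 : (D⁻¹ * Vg * (D⁻¹)ᵀ).IsHermitian := by
      unfold Matrix.IsHermitian
      rw [show ((D⁻¹ * Vg * (D⁻¹)ᵀ))ᴴ = (D⁻¹ * Vg * (D⁻¹)ᵀ)ᵀ from rfl]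
      rw [Matrix.transpose_mul, Matrix.transpose_mul, Matrix.transpose_transpose, hVgSymm,
        Matrix.mul_assoc]
    exact h1.sub hVinvHerm
  · intro x
    -- set up vectors
    set a : Fin p → ℝ := (D⁻¹)ᵀ.mulVec x with ha
    set b : Fin p → ℝ := (Vstar⁻¹).mulVec x with hb
    -- the residual random variable
    set F : Ω → ℝ := fun ω => (∑ i, a i * G ω i) - (∑ j, b j * Gstar ω j) with hF
    have hgL2 : MemLp (fun ω => ∑ i, a i * G ω i) 2 μ := by
      have h0 := memLp_finset_sum' (μ := μ) (p := 2) Finset.univ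
        (f := fun i ω => a i * G ω i) (fun i _ => (hG i).const_mul (a i))
      have h1 : (∑ i : Fin p, fun ω => a i * G ω i) = fun ω => ∑ i, a i * G ω i := by
        ext ω; simp
      rwa [h1] at h0
    have hsL2 : MemLp (fun ω => ∑ j, b j * Gstar ω j) 2 μ := by
      have h0 := memLp_finset_sum' (μ := μ) (p := 2) Finset.univ
        (f := fun j ω => b j * Gstar ω j) (fun j _ => (hGstar j).const_mul (b j))
      have h1 : (∑ j : Fin p, fun ω => b j * Gstar ω j) = fun ω => ∑ j, b j * Gstar ω j := by
        ext ω; simp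
      rwa [h1] at h0
    have hgg : Integrable (fun ω => (∑ i, a i * G ω i) * (∑ i, a i * G ω i)) μ :=
      l2_mul_integrable hgL2 hgL2
    have hgs : Integrable (fun ω => (∑ i, a i * G ω i) * (∑ j, b j * Gstar ω j)) μ :=
      l2_mul_integrable hgL2 hsL2
    have hss : Integrable (fun ω => (∑ j, b j * Gstar ω j) * (∑ j, b j * Gstar ω j)) μ :=
      l2_mul_integrable hsL2 hsL2
    -- ∫ F^2 ≥ 0
    have hFnn : 0 ≤ ∫ ω, F ω * F ω ∂μ :=
      integral_nonneg fun ω => mul_self_nonneg _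
    -- expand ∫ F^2
    have hexp : ∫ ω, F ω * F ω ∂μ
        = ((∫ ω, (∑ i, a i * G ω i) * (∑ i, a i * G ω i) ∂μ)
          + (∫ ω, (∑ j, b j * Gstar ω j) * (∑ j, b j * Gstar ω j) ∂μ))
          - 2 * (∫ ω, (∑ i, a i * G ω i) * (∑ j, b j * Gstar ω j) ∂μ) := by
      have heq : ∀ ω, F ω * F ω
          = ((∑ i, a i * G ω i) * (∑ i, a i * G ω i)
            + (∑ j, b j * Gstar ω j) * (∑ j, b j * Gstar ω j))
            - 2 * ((∑ i, a i * G ω i) * (∑ j, b j * Gstar ω j)) := by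
        intro ω; simp only [hF]; ring
      simp_rw [heq]
      have hadd : Integrable (fun ω => (∑ i, a i * G ω i) * (∑ i, a i * G ω i)
          + (∑ j, b j * Gstar ω j) * (∑ j, b j * Gstar ω j)) μ := hgg.add hss
      rw [integral_sub hadd (hgs.const_mul 2), integral_add hgg hss,
        integral_const_mul]
    -- identify the three integrals with quadratic forms
    have hI1 : ∫ ω, (∑ i, a i * G ω i) * (∑ i, a i * G ω i) ∂μ = a ⬝ᵥ Vg.mulVec a := by
      rw [aux_sum_int μ hG hG a a, aux_dot]
      subst hVg; rfl
    have hI2 : ∫ ω, (∑ i, a i * G ω i) * (∑ j, b j * Gstar ω j) ∂μ = a ⬝ᵥ D.mulVec b := by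
      rw [aux_sum_int μ hG hGstar a b, aux_dot]
      subst hD; rfl
    have hI3 : ∫ ω, (∑ j, b j * Gstar ω j) * (∑ j, b j * Gstar ω j) ∂μ
        = b ⬝ᵥ Vstar.mulVec b := by
      rw [aux_sum_int μ hGstar hGstar b b, aux_dot]
      subst hVstar; rfl
    -- matrix algebra identities
    have key1 : a ⬝ᵥ Vg.mulVec a = x ⬝ᵥ (D⁻¹ * Vg * (D⁻¹)ᵀ).mulVec x := by
      rw [ha, Matrix.mulVec_transpose, ← Matrix.dotProduct_mulVec,
        ← Matrix.mulVec_mulVec, ← Matrix.mulVec_mulVec, Matrix.mulVec_transpose]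
    have key2 : a ⬝ᵥ D.mulVec b = x ⬝ᵥ Vstar⁻¹.mulVec x := by
      rw [ha, hb, Matrix.mulVec_transpose, ← Matrix.dotProduct_mulVec,
        Matrix.mulVec_mulVec, Matrix.nonsing_inv_mul D hDdet, Matrix.one_mulVec]
    have key3 : b ⬝ᵥ Vstar.mulVec b = x ⬝ᵥ Vstar⁻¹.mulVec x := by
      rw [hb, Matrix.mulVec_mulVec, Matrix.mul_nonsing_inv Vstar hVdet, Matrix.one_mulVec,
        dotProduct_comm]
    -- conclude
    have hquad : x ⬝ᵥ (D⁻¹ * Vg * (D⁻¹)ᵀ - Vstar⁻¹).mulVec x = ∫ ω, F ω * F ω ∂μ := by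
      rw [hexp, hI1, hI2, hI3, key1, key2, key3, Matrix.sub_mulVec, dotProduct_sub]
      ring
    simpa [hquad] using hFnn
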